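/- The Bernoulli product measure with density ρ ∈ [0,1] on {0,1}^ℤ is invariant for TASEP: for every cylinder function f, the integral of Lf against the product measure μ_ρ is zero, where (Lf)(η) = Σ_{x∈ℤ} η_x (1 − η_{x+1}) (f(η^{x,x+1}) − f(η)). -/

import Mathlib

open MeasureTheory
open scoped BigOperators

/-- The TASEP configuration with the occupation values at sites `x` and `x+1` interchanged. -/
def swapConf (η : ℤ → Bool) (x : ℤ) : ℤ → Bool :=
  fun y => if y = x then η (x + 1) else if y = x + 1 then η x else η y

namespace TASEPaux

noncomputable def wt (ρ : ℝ) (b : Bool) : ℝ := if b then ρ else 1 - ρ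

def ext (T : Finset ℤ) (v : ↥T → Bool) : ℤ → Bool :=
  fun y => if h : y ∈ T then v ⟨y, h⟩ else false

lemma ext_coe (T : Finset ℤ) (v : ↥T → Bool) (y : ↥T) : ext T v ↑y = v y := by
  simp [ext]

/-- The involutive equivalence of configurations on `T` given by swapping coordinates. -/
def flipE (T : Finset ℤ) (i j : ↥T) : (↥T → Bool) ≃ (↥T → Bool) where
  toFun v := v ∘ Equiv.swap i j
  invFun v := v ∘ Equiv.swap i j
  left_inv v := by funext y; simp [Function.comp, Equiv.swap_apply_self]
  right_inv v := by funext y; simp [Function.comp, Equiv.swap_apply_self]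

lemma wt_flip (ρ : ℝ) (T : Finset ℤ) (i j : ↥T) (v : ↥T → Bool) :
    ∏ y : ↥T, wt ρ (flipE T i j v y) = ∏ y : ↥T, wt ρ (v y) := by
  simpa [flipE, Function.comp] using Equiv.prod_comp (Equiv.swap i j) (fun y => wt ρ (v y))

lemma ext_flip (T : Finset ℤ) (p q : ℤ) (hp : p ∈ T) (hq : q ∈ T) (v : ↥T → Bool) :
    ext T (flipE T ⟨p, hp⟩ ⟨q, hq⟩ v) = fun y => ext T v (Equiv.swap p q y) := by
  funext y
  by_cases hyp : y = p
  · subst hyp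
    simp [ext, flipE, hp, hq, Equiv.swap_apply_left]
  · by_cases hyq : y = q
    · subst hyq
      simp [ext, flipE, hp, hq, Equiv.swap_apply_right]
    · rw [Equiv.swap_apply_of_ne_of_ne hyp hyq]
      simp only [ext, flipE, Equiv.coe_fn_mk, Function.comp]
      by_cases hy : y ∈ T
      · rw [dif_pos hy, dif_pos hy,
          Equiv.swap_apply_of_ne_of_ne (fun h => hyp (congrArg Subtype.val h))
            (fun h => hyq (congrArg Subtype.val h))]
      · rw [dif_neg hy, dif_neg hy]

lemma swapConf_eq (η : ℤ → Bool) (x : ℤ) :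
    swapConf η x = fun y => η (Equiv.swap x (x + 1) y) := by
  funext y
  simp only [swapConf, Equiv.swap_apply_def]
  split_ifs <;> rfl

lemma swapConf_swapConf (η : ℤ → Bool) (x : ℤ) : swapConf (swapConf η x) x = η := by
  funext y
  simp only [swapConf]
  split_ifs with h1 h2 <;> simp_all

lemma swapConf_fst (η : ℤ → Bool) (x : ℤ) : swapConf η x x = η (x + 1) := by
  simp [swapConf]

lemma swapConf_snd (η : ℤ → Bool) (x : ℤ) : swapConf η x (x + 1) = η x := by
  simp [swapConf, show x + 1 ≠ x by omega]

lemma swapConf_other (η : ℤ → Bool) (x y : ℤ) (h1 : y ≠ x) (h2 : y ≠ x + 1) :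
    swapConf η x y = η y := by
  simp [swapConf, h1, h2]

lemma telescope (F : ℤ → ℝ) (m n : ℤ) (h : m ≤ n) :
    ∑ x ∈ Finset.Icc m n, (F (x + 1) - F x) = F (n + 1) - F m := by
  refine Int.le_induction (motive := fun n _ => ∑ x ∈ Finset.Icc m n, (F (x + 1) - F x)
      = F (n + 1) - F m) ?_ ?_ n h
  · simp
  · intro n hn ih
    have hins : Finset.Icc m (n + 1) = insert (n + 1) (Finset.Icc m n) := by
      ext z; simp only [Finset.mem_Icc, Finset.mem_insert]; omega
    rw [hins, Finset.sum_insert (by simp [Finset.mem_Icc]), ih]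
    ring

lemma integral_cylinder (ρ : ℝ) (hρ0 : 0 ≤ ρ) (hρ1 : ρ ≤ 1)
    (μ : Measure (ℤ → Bool)) [IsProbabilityMeasure μ]
    (hμ : ∀ (S : Finset ℤ) (v : ℤ → Bool),
      μ {η | ∀ x ∈ S, η x = v x}
        = ∏ x ∈ S, ENNReal.ofReal (if v x then ρ else 1 - ρ))
    (T : Finset ℤ) (g : (ℤ → Bool) → ℝ)
    (hg : ∀ η η' : ℤ → Bool, (∀ x ∈ T, η x = η' x) → g η = g η') :
    ∫ η, g η ∂μ = ∑ v : ↥T → Bool, g (ext T v) * ∏ y : ↥T, wt ρ (v y) := by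
  have hw : ∀ b, 0 ≤ wt ρ b := by intro b; cases b <;> simp [wt] <;> linarith
  set E : (↥T → Bool) → Set (ℤ → Bool) := fun v => {η | ∀ x ∈ T, η x = ext T v x} with hE
  have hmeas : ∀ v, MeasurableSet (E v) := by
    intro v
    have hEv : E v = ⋂ x ∈ (T : Set ℤ), {η : ℤ → Bool | η x = ext T v x} := by
      ext η; simp [hE]
    rw [hEv]
    refine MeasurableSet.biInter T.countable_toSet (fun x _ => ?_)
    have : {η : ℤ → Bool | η x = ext T v x} = (fun η : ℤ → Bool => η x) ⁻¹' {ext T v x} := by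
      ext η; simp
    rw [this]
    exact (measurable_pi_apply x) (measurableSet_singleton _)
  have hpt : ∀ η, g η = ∑ v : ↥T → Bool, Set.indicator (E v) (fun _ => g (ext T v)) η := by
    intro η
    rw [Finset.sum_eq_single_of_mem (fun y : ↥T => η ↑y) (Finset.mem_univ _)]
    · rw [Set.indicator_of_mem (by intro x hx; simp [ext, hx])]
      exact hg η _ (fun x hx => by simp [ext, hx])
    · intro v _ hv
      apply Set.indicator_of_notMem
      intro hmem
      apply hv
      funext y
      have h := hmem ↑y y.2
      rw [ext_coe] at h
      exact h.symm
  calc ∫ η, g η ∂μ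
      = ∫ η, ∑ v : ↥T → Bool, Set.indicator (E v) (fun _ => g (ext T v)) η ∂μ := by
        exact integral_congr_ae (Filter.Eventually.of_forall hpt)
    _ = ∑ v : ↥T → Bool, ∫ η, Set.indicator (E v) (fun _ => g (ext T v)) η ∂μ := by
        exact integral_finset_sum _ (fun v _ => (integrable_const _).indicator (hmeas v))
    _ = ∑ v : ↥T → Bool, g (ext T v) * ∏ y : ↥T, wt ρ (v y) := by
        refine Finset.sum_congr rfl (fun v _ => ?_)
        rw [integral_indicator_const _ (hmeas v), measureReal_def, hμ T (ext T v), ENNReal.toReal_prod]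
        have h1 : ∀ x ∈ T, (ENNReal.ofReal (if ext T v x then ρ else 1 - ρ)).toReal
            = wt ρ (ext T v x) := by
          intro x _
          rw [show (if ext T v x then ρ else 1 - ρ) = wt ρ (ext T v x) from rfl,
            ENNReal.toReal_ofReal (hw (ext T v x))]
        rw [Finset.prod_congr rfl h1]
        have h2 : ∏ x ∈ T, wt ρ (ext T v x) = ∏ y : ↥T, wt ρ (v y) := by
          rw [← Finset.prod_coe_sort]
          exact Finset.prod_congr rfl (fun y _ => by rw [ext_coe])
        rw [h2, smul_eq_mul, mul_comm]

end TASEPaux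

open TASEPaux

/-- The Bernoulli product measure with density `ρ` is invariant for TASEP:
`∫ (Lf) dμ_ρ = 0` for every (bounded measurable) cylinder function `f`. -/
theorem bernoulli_product_invariant_TASEP (ρ : ℝ) (hρ : ρ ∈ Set.Icc (0:ℝ) 1)
    (μ : Measure (ℤ → Bool)) [IsProbabilityMeasure μ]
    (hμ : ∀ (S : Finset ℤ) (v : ℤ → Bool),
      μ {η | ∀ x ∈ S, η x = v x}
        = ∏ x ∈ S, ENNReal.ofReal (if v x then ρ else 1 - ρ))
    (f : (ℤ → Bool) → ℝ) (hf : Measurable f)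
    (S : Finset ℤ) (hcyl : ∀ η η' : ℤ → Bool, (∀ x ∈ S, η x = η' x) → f η = f η') :
    ∫ η, (∑' x : ℤ, if η x = true ∧ η (x + 1) = false
        then f (swapConf η x) - f η else 0) ∂μ = 0 := by
  obtain ⟨hρ0, hρ1⟩ := hρ
  set M : ℕ := S.sup (fun x => x.natAbs) with hM
  set m : ℤ := -(M : ℤ) - 1 with hm
  set n : ℤ := (M : ℤ) with hn
  have hmn : m ≤ n := by omega
  have hS : ∀ x ∈ S, m < x ∧ x ≤ n := by
    intro x hx
    have h : x.natAbs ≤ M := Finset.le_sup (f := fun x : ℤ => x.natAbs) hx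
    omega
  set T : Finset ℤ := Finset.Icc m (n + 1) with hT
  have hmemT : ∀ z, m ≤ z → z ≤ n + 1 → z ∈ T := by
    intro z h1 h2; rw [hT, Finset.mem_Icc]; exact ⟨h1, h2⟩
  have hST : ∀ y ∈ S, y ∈ T := fun y hy => hmemT y (by have := hS y hy; omega)
      (by have := hS y hy; omega)
  -- Step 1: reduce the tsum to a finite sum over `Icc m n`.
  have htsum : ∀ η : ℤ → Bool, (∑' x : ℤ, if η x = true ∧ η (x + 1) = false
      then f (swapConf η x) - f η else 0)
      = ∑ x ∈ Finset.Icc m n, (if η x = true ∧ η (x + 1) = false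
        then f (swapConf η x) - f η else 0) := by
    intro η
    refine tsum_eq_sum (fun x hx => ?_)
    rw [Finset.mem_Icc] at hx
    have hfs : f (swapConf η x) = f η := by
      refine hcyl _ _ (fun y hy => ?_)
      have h1 := hS y hy
      exact swapConf_other η x y (by omega) (by omega)
    simp [hfs]
  have hint : ∫ η, (∑' x : ℤ, if η x = true ∧ η (x + 1) = false
        then f (swapConf η x) - f η else 0) ∂μ
      = ∫ η, (∑ x ∈ Finset.Icc m n, if η x = true ∧ η (x + 1) = false
        then f (swapConf η x) - f η else 0) ∂μ := by
    exact integral_congr_ae (Filter.Eventually.of_forall htsum)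
  rw [hint]
  -- Step 2: cylinder property of the finite sum over `T`.
  have hG : ∀ η η' : ℤ → Bool, (∀ x ∈ T, η x = η' x) →
      (∑ x ∈ Finset.Icc m n, if η x = true ∧ η (x + 1) = false
        then f (swapConf η x) - f η else 0)
      = (∑ x ∈ Finset.Icc m n, if η' x = true ∧ η' (x + 1) = false
        then f (swapConf η' x) - f η' else 0) := by
    intro η η' h
    refine Finset.sum_congr rfl (fun x hx => ?_)
    rw [Finset.mem_Icc] at hx
    have hx0 : η x = η' x := h x (hmemT x (by omega) (by omega))
    have hx1 : η (x + 1) = η' (x + 1) := h (x + 1) (hmemT (x + 1) (by omega) (by omega))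
    have hswap : f (swapConf η x) = f (swapConf η' x) := by
      refine hcyl _ _ (fun y hy => ?_)
      by_cases h1 : y = x
      · subst h1; rw [swapConf_fst, swapConf_fst, hx1]
      · by_cases h2 : y = x + 1
        · subst h2; rw [swapConf_snd, swapConf_snd, hx0]
        · rw [swapConf_other η x y h1 h2, swapConf_other η' x y h1 h2]
          exact h y (hST y hy)
    have hfη : f η = f η' := hcyl _ _ (fun y hy => h y (hST y hy))
    rw [hx0, hx1, hswap, hfη]
  -- Step 3: apply the finite-dimensional integral formula.
  have hic := integral_cylinder ρ hρ0 hρ1 μ hμ T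
    (fun η => ∑ x ∈ Finset.Icc m n, if η x = true ∧ η (x + 1) = false
      then f (swapConf η x) - f η else 0) hG
  rw [hic]
  -- Step 4: the combinatorial identity.
  clear hic hint htsum
  set W : (↥T → Bool) → ℝ := fun v => ∏ y : ↥T, wt ρ (v y) with hW
  have hWflip : ∀ (i j : ↥T) (v : ↥T → Bool), W (flipE T i j v) = W v := by
    intro i j v; rw [hW]; exact wt_flip ρ T i j v
  have hbi : ∀ v : ↥T → Bool,
      (∑ x ∈ Finset.Icc m n, if ext T v x = true ∧ ext T v (x + 1) = false
        then f (swapConf (ext T v) x) - f (ext T v) else 0) * W v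
      = ∑ x ∈ Finset.Icc m n, (if ext T v x = true ∧ ext T v (x + 1) = false
        then f (swapConf (ext T v) x) - f (ext T v) else 0) * W v := by
    intro v; rw [Finset.sum_mul]
  rw [Finset.sum_congr rfl (fun v _ => hbi v)]
  rw [Finset.sum_comm]
  -- per-site swap change of variables
  have step1 : ∀ x ∈ Finset.Icc m n,
      (∑ v : ↥T → Bool, (if ext T v x = true ∧ ext T v (x + 1) = false
          then f (swapConf (ext T v) x) - f (ext T v) else 0) * W v)
      = ∑ v : ↥T → Bool,
          (((if ext T v (x + 1) then (1:ℝ) else 0) - (if ext T v x then (1:ℝ) else 0))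
            * (f (ext T v) * W v)) := by
    intro x hx
    rw [Finset.mem_Icc] at hx
    have hxT1 : x ∈ T := hmemT x (by omega) (by omega)
    have hxT2 : x + 1 ∈ T := hmemT (x + 1) (by omega) (by omega)
    have hsplit : ∀ v : ↥T → Bool,
        (if ext T v x = true ∧ ext T v (x + 1) = false
          then f (swapConf (ext T v) x) - f (ext T v) else 0) * W v
        = (if ext T v x = true ∧ ext T v (x + 1) = false
            then f (swapConf (ext T v) x) * W v else 0)
          - (if ext T v x = true ∧ ext T v (x + 1) = false
            then f (ext T v) * W v else 0) := by
      intro v; split_ifs <;> ring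
    simp only [hsplit]
    rw [Finset.sum_sub_distrib]
    have hre : (∑ v : ↥T → Bool, if ext T v x = true ∧ ext T v (x + 1) = false
          then f (swapConf (ext T v) x) * W v else 0)
        = ∑ v : ↥T → Bool, (if ext T v (x + 1) = true ∧ ext T v x = false
          then f (ext T v) * W v else 0) := by
      refine (Fintype.sum_equiv (flipE T ⟨x, hxT1⟩ ⟨x + 1, hxT2⟩)
        _ _ (fun v => ?_)).symm
      have hev : ext T (flipE T ⟨x, hxT1⟩ ⟨x + 1, hxT2⟩ v) = swapConf (ext T v) x := by
        rw [ext_flip, swapConf_eq]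
      rw [hev, hWflip, swapConf_fst, swapConf_snd, swapConf_swapConf]
    rw [hre, ← Finset.sum_sub_distrib]
    refine Finset.sum_congr rfl (fun v _ => ?_)
    cases hA : ext T v x <;> cases hB : ext T v (x + 1) <;> simp <;> ring
  rw [Finset.sum_congr rfl step1, Finset.sum_comm]
  -- telescope the inner sum
  have step2 : ∀ v : ↥T → Bool,
      (∑ x ∈ Finset.Icc m n,
        (((if ext T v (x + 1) then (1:ℝ) else 0) - (if ext T v x then (1:ℝ) else 0))
          * (f (ext T v) * W v)))
      = ((if ext T v (n + 1) then (1:ℝ) else 0) - (if ext T v m then (1:ℝ) else 0))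
          * (f (ext T v) * W v) := by
    intro v
    rw [← Finset.sum_mul, telescope (fun z => if ext T v z then (1:ℝ) else 0) m n hmn]
  rw [Finset.sum_congr rfl (fun v _ => step2 v)]
  -- final boundary swap
  have hmT : m ∈ T := hmemT m le_rfl (by omega)
  have hn1T : n + 1 ∈ T := hmemT (n + 1) (by omega) le_rfl
  have hfinal : (∑ v : ↥T → Bool,
      ((if ext T v (n + 1) then (1:ℝ) else 0) - (if ext T v m then (1:ℝ) else 0))
        * (f (ext T v) * W v))
      = ∑ v : ↥T → Bool, -((((if ext T v (n + 1) then (1:ℝ) else 0)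
          - (if ext T v m then (1:ℝ) else 0)) * (f (ext T v) * W v))) := by
    refine Fintype.sum_equiv (flipE T ⟨m, hmT⟩ ⟨n + 1, hn1T⟩) _ _ (fun v => ?_)
    have hev : ext T (flipE T ⟨m, hmT⟩ ⟨n + 1, hn1T⟩ v)
        = fun y => ext T v (Equiv.swap m (n + 1) y) := ext_flip T m (n + 1) hmT hn1T v
    rw [hWflip, hev]
    have h1 : ext T v (Equiv.swap m (n + 1) (n + 1)) = ext T v m := by
      rw [Equiv.swap_apply_right]
    have h2 : ext T v (Equiv.swap m (n + 1) m) = ext T v (n + 1) := by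
      rw [Equiv.swap_apply_left]
    have h3 : f (fun y => ext T v (Equiv.swap m (n + 1) y)) = f (ext T v) := by
      refine hcyl _ _ (fun y hy => ?_)
      have hy' := hS y hy
      rw [Equiv.swap_apply_of_ne_of_ne (by omega) (by omega)]
    rw [h3]
    simp only [Equiv.swap_apply_left, Equiv.swap_apply_right]
    ring
  have hzero : (∑ v : ↥T → Bool,
      ((if ext T v (n + 1) then (1:ℝ) else 0) - (if ext T v m then (1:ℝ) else 0))
        * (f (ext T v) * W v)) = 0 := by
    have := hfinal
    rw [Finset.sum_neg_distrib] at this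
    linarith
  exact hzero
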